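/- Let k ≥ 2, let W be a cyclic word, and let u be a reduced word of length k−1. Then Σ_{t̄ ∈ W_k} occ(t, W) · occf(u, t) = 2 · occ(u, W), where for each unoriented word t̄ = {t, t^{-1}} of length k the quantities occ(t, W) and occf(u, t) are independent of the choice of orientation t of t̄. -/

import Mathlib

open List

/-- A letter of the free group `F_n`: a generator index together with a sign. -/
abbrev Letter (n : ℕ) := Fin n × Bool

/-- The inverse of a letter. -/
def linv {n : ℕ} (a : Letter n) : Letter n := (a.1, !a.2)

@[simp] lemma linv_linv {n : ℕ} (a : Letter n) : linv (linv a) = a := by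
  cases a with
  | mk x b => simp [linv]

/-- The (formal) inverse of a word. -/
def wInv {n : ℕ} (w : List (Letter n)) : List (Letter n) := (w.map linv).reverse

@[simp] lemma wInv_wInv {n : ℕ} (w : List (Letter n)) : wInv (wInv w) = w := by
  simp [wInv, Function.comp_def]

/-- A word is reduced if no two consecutive letters are mutually inverse. -/
def Reduced {n : ℕ} (w : List (Letter n)) : Prop :=
  List.Chain' (fun a b => b ≠ linv a) w

/-- A word is cyclically reduced if it is reduced and its first and last letters
are not mutually inverse. -/
def CyclicallyReduced {n : ℕ} (w : List (Letter n)) : Prop :=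
  Reduced w ∧ ∀ a b, w.head? = some a → w.getLast? = some b → a ≠ linv b

/-- `lpow l m` is the `m`-fold concatenation of the list `l` with itself. -/
def lpow {α : Type*} (l : List α) : ℕ → List α
  | 0 => []
  | m + 1 => l ++ lpow l m

/-- The number of oriented occurrences of `u` in the cyclic word represented by `w`. -/
def orientedOcc {n : ℕ} (u w : List (Letter n)) : ℕ :=
  ((Finset.range w.length).filter (fun i => u <+: lpow (w.rotate i) (u.length + 1))).card

/-- `occ u w` : occurrences of the unoriented word `{u, u⁻¹}` in the cyclic word
represented by `w`. -/
def occ {n : ℕ} (u w : List (Letter n)) : ℕ :=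
  orientedOcc u w + orientedOcc (wInv u) w

lemma occ_wInv {n : ℕ} (u w : List (Letter n)) : occ (wInv u) w = occ u w := by
  simp [occ, wInv_wInv, Nat.add_comm]

/-- Occurrences of `u` as a contiguous factor of `w`. -/
def factOcc {n : ℕ} (u w : List (Letter n)) : ℕ :=
  ((Finset.range (w.length + 1)).filter (fun i => u <+: w.drop i)).card

/-- `occf u w` : occurrences of `{u, u⁻¹}` as a contiguous factor of `w`. -/
def occf {n : ℕ} (u w : List (Letter n)) : ℕ := factOcc u w + factOcc (wInv u) w

/-- Two cyclically reduced words represent the same cyclic word iff one is a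
rotation of the other or of its inverse. -/
def SameCyclicWord {n : ℕ} (v w : List (Letter n)) : Prop :=
  (∃ i, w = v.rotate i) ∨ (∃ i, w = (wInv v).rotate i)

/-- Cyclic reduction: repeatedly delete the first and last letter while they are
mutually inverse. -/
def cyclicReduce {n : ℕ} : List (Letter n) → List (Letter n)
  | [] => []
  | a :: rest =>
    if rest.getLast? = some (linv a) then cyclicReduce rest.dropLast
    else a :: rest
  termination_by w => w.length
  decreasing_by simp [List.length_dropLast] <;> omega



section AuxLemmas

variable {n : ℕ}

lemma wInv_append (a b : List (Letter n)) : wInv (a ++ b) = wInv b ++ wInv a := by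
  simp [wInv]

@[simp] lemma length_wInv (a : List (Letter n)) : (wInv a).length = a.length := by
  simp [wInv]

lemma wInv_prefix_of_suffix {a b : List (Letter n)} (h : a <:+ b) : wInv a <+: wInv b := by
  obtain ⟨s, hs⟩ := h
  exact ⟨wInv s, by rw [← hs, wInv_append]⟩

lemma lpow_nil {α : Type*} (m : ℕ) : lpow ([] : List α) m = [] := by
  induction m with
  | zero => rfl
  | succ m ih => simp [lpow, ih]

lemma lpow_length {α : Type*} (l : List α) (m : ℕ) : (lpow l m).length = m * l.length := by
  induction m with
  | zero => simp [lpow]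
  | succ m ih => simp [lpow, ih]; ring

lemma lpow_succ_right {α : Type*} (l : List α) (m : ℕ) : lpow l (m+1) = lpow l m ++ l := by
  induction m with
  | zero => simp [lpow]
  | succ m ih =>
    calc lpow l (m+2) = l ++ lpow l (m+1) := rfl
    _ = l ++ (lpow l m ++ l) := by rw [ih]
    _ = (l ++ lpow l m) ++ l := by rw [List.append_assoc]
    _ = lpow l (m+1) ++ l := rfl

lemma lpow_prefix {α : Type*} (l : List α) {m m' : ℕ} (h : m ≤ m') :
    lpow l m <+: lpow l m' := by
  induction m' with
  | zero =>
    obtain rfl : m = 0 := Nat.le_zero.mp h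
    exact List.prefix_refl _
  | succ m' ih =>
    rcases Nat.lt_or_ge m (m'+1) with h' | h'
    · refine (ih (by omega)).trans ?_
      rw [lpow_succ_right]
      exact List.prefix_append _ _
    · obtain rfl : m = m'+1 := by omega
      exact List.prefix_refl _

lemma take_eq_of_prefix {α : Type*} {A B : List α} (h : A <+: B) {j : ℕ} (hj : j ≤ A.length) :
    B.take j = A.take j := by
  obtain ⟨c, rfl⟩ := h
  rw [List.take_append, Nat.sub_eq_zero_of_le hj, List.take_zero, List.append_nil]

lemma rotate_one_eq {α : Type*} (v : List α) : v.rotate 1 = v.drop 1 ++ v.take 1 := by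
  cases v with
  | nil => rfl
  | cons a l => simpa using List.rotate_cons_succ l a 0

lemma lpow_rotate_one_prefix {α : Type*} (v : List α) (M : ℕ) :
    lpow (v.rotate 1) M <+: v.drop 1 ++ lpow v M := by
  induction M with
  | zero => exact List.nil_prefix
  | succ M ih =>
    obtain ⟨c, hc⟩ := ih
    refine ⟨c, ?_⟩
    show v.rotate 1 ++ lpow (v.rotate 1) M ++ c = v.drop 1 ++ lpow v (M+1)
    rw [List.append_assoc, hc, rotate_one_eq]
    show (v.drop 1 ++ v.take 1) ++ (v.drop 1 ++ lpow v M) = v.drop 1 ++ (v ++ lpow v M)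
    rw [List.append_assoc, ← List.append_assoc (v.take 1), List.take_append_drop]

lemma head?_lpow {α : Type*} (v : List α) (m : ℕ) (hm : m ≠ 0) :
    (lpow v m).head? = v.head? := by
  cases v with
  | nil => rw [lpow_nil]
  | cons a l =>
    cases m with
    | zero => exact absurd rfl hm
    | succ m => rfl

lemma reduced_lpow {v : List (Letter n)} (h : CyclicallyReduced v) (m : ℕ) :
    Reduced (lpow v m) := by
  induction m with
  | zero => exact List.isChain_nil
  | succ m ih =>
    show List.Chain' _ (v ++ lpow v m)
    refine List.isChain_append.mpr ?_
    refine ⟨h.1, ih, ?_⟩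
    intro x hx y hy
    rcases Nat.eq_zero_or_pos m with rfl | hm
    · simp [lpow] at hy
    · rw [head?_lpow v m (by omega)] at hy
      simp only [Option.mem_def] at hx hy
      exact h.2 y x hy hx

lemma head?_append_left {α : Type*} {a : List α} (ha : a ≠ []) (b : List α) :
    (a ++ b).head? = a.head? := by
  cases a with
  | nil => exact absurd rfl ha
  | cons x l => rfl

lemma getLast?_append_right {α : Type*} (a : List α) {b : List α} (hb : b ≠ []) :
    (a ++ b).getLast? = b.getLast? := by
  rw [List.getLast?_append]
  cases hbl : b.getLast? with
  | none =>
    exact absurd (by simpa using hbl) hb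
  | some x => rfl

lemma cyclicallyReduced_swap {a b : List (Letter n)} (h : CyclicallyReduced (a ++ b)) :
    CyclicallyReduced (b ++ a) := by
  rcases eq_or_ne a [] with rfl | ha
  · simpa using h
  rcases eq_or_ne b [] with rfl | hb
  · simpa using h
  obtain ⟨ha1, ha2, hab⟩ := List.isChain_append.mp h.1
  refine ⟨List.isChain_append.mpr ⟨ha2, ha1, ?_⟩, ?_⟩
  · intro x hx y hy
    simp only [Option.mem_def] at hx hy
    refine h.2 y x ?_ ?_
    · rw [head?_append_left ha, hy]
    · rw [getLast?_append_right a hb, hx]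
  · intro x y hx hy
    rw [head?_append_left hb] at hx
    rw [getLast?_append_right b ha] at hy
    exact hab y (by rw [Option.mem_def, hy]) x (by rw [Option.mem_def, hx])

lemma cyclicallyReduced_rotate {w : List (Letter n)} (h : CyclicallyReduced w) (i : ℕ) :
    CyclicallyReduced (w.rotate i) := by
  rcases eq_or_ne w [] with rfl | hw
  · simpa using h
  have hlen : 0 < w.length := List.length_pos_iff.mpr hw
  rw [← List.rotate_mod, List.rotate_eq_drop_append_take (le_of_lt (Nat.mod_lt _ hlen))]
  refine cyclicallyReduced_swap (a := w.take (i % w.length)) (b := w.drop (i % w.length)) ?_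
  rw [List.take_append_drop]
  exact h

lemma factOcc_wInv_aux (u w : List (Letter n)) (i : ℕ) (hi : i ≤ w.length)
    (h : u <+: (wInv w).drop i) :
    u.length + i ≤ w.length ∧ wInv u <+: w.drop (w.length - u.length - i) := by
  obtain ⟨r, hr⟩ := h
  have hsplit : (wInv w).take i ++ (u ++ r) = wInv w := by
    rw [hr]; exact List.take_append_drop i (wInv w)
  have hlen : i + (u.length + r.length) = w.length := by
    have h1 := congrArg List.length hsplit
    simp only [List.length_append, List.length_take, length_wInv] at h1
    omega
  have hpre : wInv (u ++ r) <+: w := by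
    have h2 : wInv (u ++ r) <+: wInv (wInv w) :=
      wInv_prefix_of_suffix ⟨(wInv w).take i, hsplit⟩
    rwa [wInv_wInv] at h2
  refine ⟨by omega, ?_⟩
  obtain ⟨c, hc⟩ := hpre
  have hnum : w.length - u.length - i = (wInv r).length := by rw [length_wInv]; omega
  rw [hnum, ← hc, wInv_append, List.append_assoc, List.drop_left]
  exact List.prefix_append _ _

lemma factOcc_wInv (u w : List (Letter n)) :
    factOcc u (wInv w) = factOcc (wInv u) w := by
  classical
  simp only [factOcc, length_wInv]
  refine Finset.card_bij' (fun i _ => w.length - u.length - i)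
    (fun j _ => w.length - u.length - j) ?_ ?_ ?_ ?_
  · intro a ha
    simp only [Finset.mem_filter, Finset.mem_range] at ha ⊢
    obtain ⟨ha1, ha2⟩ := ha
    obtain ⟨hb1, hb2⟩ := factOcc_wInv_aux u w a (by omega) ha2
    refine ⟨by omega, ?_⟩
    simpa [length_wInv] using hb2
  · intro a ha
    simp only [Finset.mem_filter, Finset.mem_range] at ha ⊢
    obtain ⟨ha1, ha2⟩ := ha
    have ha2' : wInv u <+: (wInv (wInv w)).drop a := by rw [wInv_wInv]; exact ha2
    obtain ⟨hb1, hb2⟩ := factOcc_wInv_aux (wInv u) (wInv w) a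
      (by rw [length_wInv]; omega) ha2'
    simp only [length_wInv] at hb1
    simp only [length_wInv, wInv_wInv] at hb2
    refine ⟨by omega, hb2⟩
  · intro a ha
    simp only [Finset.mem_filter, Finset.mem_range] at ha
    obtain ⟨hb1, _⟩ := factOcc_wInv_aux u w a (by omega) ha.2
    show w.length - u.length - (w.length - u.length - a) = a
    omega
  · intro a ha
    simp only [Finset.mem_filter, Finset.mem_range] at ha
    have ha2' : wInv u <+: (wInv (wInv w)).drop a := by rw [wInv_wInv]; exact ha.2
    obtain ⟨hb1, _⟩ := factOcc_wInv_aux (wInv u) (wInv w) a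
      (by rw [length_wInv]; omega) ha2'
    simp only [length_wInv] at hb1
    show w.length - u.length - (w.length - u.length - a) = a
    omega

end AuxLemmas

/-- Let `T` contain exactly one orientation of each unoriented
reduced word of length `k`. Then for any cyclic word `W` (represented by `w`) and any
reduced word `u` of length `k - 1`,
`Σ_{t ∈ T} occ(t, W) · occf(u, t) = 2 · occ(u, W)`; by the choice of `T` the summands
are independent of the chosen orientations. -/
theorem sum_occ_occf (n k : ℕ) (hk : 2 ≤ k)
    (T : Finset (List (Letter n)))
    (hTmem : ∀ t ∈ T, Reduced t ∧ t.length = k)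
    (hTone : ∀ t : List (Letter n), Reduced t → t.length = k → (t ∈ T ↔ wInv t ∉ T))
    (w : List (Letter n)) (hw : w ≠ []) (hcr : CyclicallyReduced w)
    (u : List (Letter n)) (hur : Reduced u) (hul : u.length = k - 1) :
    ∑ t ∈ T, occ t w * occf u t = 2 * occ u w := by
    classical
  have hL : 0 < w.length := List.length_pos_iff.mpr hw
  set f : ℕ → List (Letter n) := fun i => (lpow (w.rotate i) (k+1)).take k with hfdef
  have hfi_eq : ∀ i, f i = (lpow (w.rotate i) (k+1)).take k := fun _ => rfl
  have hlenlpow : ∀ (i m : ℕ), (lpow (w.rotate i) m).length = m * w.length := by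
    intro i m; rw [lpow_length, List.length_rotate]
  have hkL : k ≤ (k+1) * w.length := by nlinarith [hL]
  have hkL2 : k ≤ k * w.length := by nlinarith [hL]
  have hflen : ∀ i, (f i).length = k := by
    intro i
    rw [hfi_eq, List.length_take, hlenlpow]
    omega
  have hfred : ∀ i, Reduced (f i) := by
    intro i
    have hv : CyclicallyReduced (w.rotate i) := cyclicallyReduced_rotate hcr i
    exact List.IsChain.prefix (reduced_lpow hv (k+1)) (by rw [hfi_eq]; exact List.take_prefix _ _)
  have hE1 : ∀ t : List (Letter n), t.length = k → ∀ i,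
      (t <+: lpow (w.rotate i) (t.length + 1) ↔ f i = t) := by
    intro t ht i
    rw [ht, List.prefix_iff_eq_take, ht, hfi_eq i]
    exact eq_comm
  have hE2 : ∀ x : List (Letter n), x.length = k - 1 → ∀ i,
      (x <+: lpow (w.rotate i) (x.length + 1) ↔ x <+: f i) := by
    intro x hx i
    have h1 : lpow (w.rotate i) (x.length + 1) <+: lpow (w.rotate i) (k+1) :=
      lpow_prefix _ (by omega)
    have h2 : f i <+: lpow (w.rotate i) (k+1) := by
      rw [hfi_eq]; exact List.take_prefix _ _
    constructor
    · intro h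
      refine List.prefix_of_prefix_length_le (h.trans h1) h2 ?_
      rw [hflen i]; omega
    · intro h
      refine List.prefix_of_prefix_length_le (h.trans h2) h1 ?_
      rw [hlenlpow]
      nlinarith [hL]
  have hdrop : ∀ i, (f i).drop 1 = (f ((i+1) % w.length)).take (k-1) := by
    intro i
    have hvlen : (w.rotate i).length = w.length := List.length_rotate w i
    have h0 : 1 - (w.rotate i).length = 0 := by omega
    calc (f i).drop 1 = ((lpow (w.rotate i) (k+1)).take k).drop 1 := by rw [hfi_eq]
      _ = ((lpow (w.rotate i) (k+1)).drop 1).take (k-1) := by rw [List.drop_take]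
      _ = ((w.rotate i).drop 1 ++ lpow (w.rotate i) k).take (k-1) := by
            rw [show lpow (w.rotate i) (k+1) = (w.rotate i) ++ lpow (w.rotate i) k from rfl,
              List.drop_append, h0, List.drop_zero]
      _ = (lpow ((w.rotate i).rotate 1) k).take (k-1) := by
            refine take_eq_of_prefix (lpow_rotate_one_prefix _ k) ?_
            rw [lpow_length, List.length_rotate, List.length_rotate]
            omega
      _ = (lpow (w.rotate (i+1)) k).take (k-1) := by rw [List.rotate_rotate]
      _ = (lpow (w.rotate (i+1)) (k+1)).take (k-1) := by
            refine (take_eq_of_prefix (lpow_prefix _ (by omega)) ?_).symm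
            rw [hlenlpow]; omega
      _ = (f ((i+1) % w.length)).take (k-1) := by
            rw [hfi_eq, List.take_take, min_eq_left (by omega : k-1 ≤ k),
              List.rotate_mod]
  have hE3 : ∀ x : List (Letter n), x.length = k - 1 → ∀ i,
      (x <+: (f i).drop 1 ↔ x <+: f ((i+1) % w.length)) := by
    intro x hx i
    rw [hdrop i, List.prefix_iff_eq_take, List.prefix_iff_eq_take, hx, List.take_take,
      Nat.min_self]
  have hOt : ∀ t : List (Letter n), t.length = k →
      orientedOcc t w = ∑ i ∈ Finset.range w.length, if f i = t then 1 else 0 := by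
    intro t ht
    simp only [orientedOcc, Finset.card_filter]
    exact Finset.sum_congr rfl fun i _ => if_congr (hE1 t ht i) rfl rfl
  have hOx : ∀ x : List (Letter n), x.length = k - 1 →
      orientedOcc x w = ∑ i ∈ Finset.range w.length, if x <+: f i then 1 else 0 := by
    intro x hx
    simp only [orientedOcc, Finset.card_filter]
    exact Finset.sum_congr rfl fun i _ => if_congr (hE2 x hx i) rfl rfl
  have hoccfInv : ∀ t : List (Letter n), occf u (wInv t) = occf u t := by
    intro t
    simp only [occf, factOcc_wInv, wInv_wInv]
    omega
  have hoccf4 : ∀ t : List (Letter n), t.length = k →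
      occf u t = ((if u <+: t then 1 else 0) + (if u <+: t.drop 1 then 1 else 0))
        + ((if wInv u <+: t then 1 else 0) + (if wInv u <+: t.drop 1 then 1 else 0)) := by
    intro t ht
    have key : ∀ x : List (Letter n), x.length = k - 1 →
        factOcc x t = (if x <+: t then 1 else 0) + (if x <+: t.drop 1 then 1 else 0) := by
      intro x hx
      simp only [factOcc, Finset.card_filter, ht]
      rw [← Finset.sum_subset (s₁ := ({0,1} : Finset ℕ)) ?_ ?_]
      · rw [Finset.sum_pair (by omega : (0:ℕ) ≠ 1), List.drop_zero]
      · intro a ha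
        simp only [Finset.mem_insert, Finset.mem_singleton] at ha
        rw [Finset.mem_range]
        omega
      · intro a _ hna
        simp only [Finset.mem_insert, Finset.mem_singleton] at hna
        have ha2 : 2 ≤ a := by omega
        rw [if_neg]
        intro hpre
        have hle := hpre.length_le
        rw [List.length_drop, ht, hx] at hle
        omega
    rw [occf, key u hul, key (wInv u) (by rw [length_wInv]; exact hul)]
  have hstep1 : ∑ t ∈ T, occ t w * occf u t
      = ∑ i ∈ Finset.range w.length, occf u (f i) := by
    have hswap : ∑ t ∈ T, occ t w * occf u t
        = ∑ t ∈ T, ∑ i ∈ Finset.range w.length,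
            ((if f i = t then (1:ℕ) else 0) + (if f i = wInv t then 1 else 0)) * occf u t := by
      refine Finset.sum_congr rfl fun t htT => ?_
      obtain ⟨htr, htl⟩ := hTmem t htT
      rw [occ, hOt t htl, hOt (wInv t) (by rw [length_wInv]; exact htl),
        ← Finset.sum_add_distrib, Finset.sum_mul]
    rw [hswap, Finset.sum_comm]
    refine Finset.sum_congr rfl fun i _ => ?_
    have hft := hflen i
    have hfr := hfred i
    by_cases hfT : f i ∈ T
    · have hninv : wInv (f i) ∉ T := (hTone (f i) hfr hft).mp hfT
      rw [Finset.sum_eq_single (f i)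
        (fun t htT hne => by
          rw [if_neg (fun h => hne h.symm),
            if_neg (fun h => hninv (by rw [h, wInv_wInv]; exact htT))]
          simp)
        (fun h => absurd hfT h)]
      rw [if_pos rfl, if_neg (fun h => hninv (by rw [← h]; exact hfT))]
      simp
    · have hinv : wInv (f i) ∈ T := by
        by_contra hcon
        exact hfT ((hTone (f i) hfr hft).mpr hcon)
      rw [Finset.sum_eq_single (wInv (f i))
        (fun t htT hne => by
          rw [if_neg (fun h => hfT (by rw [h]; exact htT)),
            if_neg (fun h => hne (by rw [h, wInv_wInv]))]
          simp)
        (fun h => absurd hinv h)]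
      rw [if_neg (fun h => hfT (by rw [h]; exact hinv)),
        if_pos (wInv_wInv (f i)).symm, hoccfInv]
      simp
  have hreindex : ∀ x : List (Letter n), x.length = k - 1 →
      (∑ i ∈ Finset.range w.length, (if x <+: (f i).drop 1 then (1:ℕ) else 0))
      = ∑ i ∈ Finset.range w.length, (if x <+: f i then (1:ℕ) else 0) := by
    intro x hx
    rw [Finset.sum_congr rfl fun i (_ : i ∈ Finset.range w.length) =>
      if_congr (hE3 x hx i) rfl rfl]
    refine Finset.sum_bij' (fun a _ => (a+1) % w.length)
      (fun a _ => (a + (w.length - 1)) % w.length) ?_ ?_ ?_ ?_ ?_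
    · intro a _; exact Finset.mem_range.mpr (Nat.mod_lt _ hL)
    · intro a _; exact Finset.mem_range.mpr (Nat.mod_lt _ hL)
    · intro a ha
      have haL : a < w.length := Finset.mem_range.mp ha
      show ((a + 1) % w.length + (w.length - 1)) % w.length = a
      rw [Nat.mod_add_mod, show a + 1 + (w.length - 1) = a + w.length by omega,
        Nat.add_mod_right]
      exact Nat.mod_eq_of_lt haL
    · intro a ha
      have haL : a < w.length := Finset.mem_range.mp ha
      show ((a + (w.length - 1)) % w.length + 1) % w.length = a
      rw [Nat.mod_add_mod, show a + (w.length - 1) + 1 = a + w.length by omega,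
        Nat.add_mod_right]
      exact Nat.mod_eq_of_lt haL
    · intro a _; rfl
  rw [hstep1]
  have e1 : ∑ i ∈ Finset.range w.length, occf u (f i)
      = (∑ i ∈ Finset.range w.length,
          ((if u <+: f i then (1:ℕ) else 0) + (if wInv u <+: f i then 1 else 0)))
      + (∑ i ∈ Finset.range w.length,
          ((if u <+: (f i).drop 1 then (1:ℕ) else 0)
            + (if wInv u <+: (f i).drop 1 then 1 else 0))) := by
    rw [← Finset.sum_add_distrib]
    refine Finset.sum_congr rfl fun i _ => ?_
    rw [hoccf4 (f i) (hflen i)]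
    ring
  have hwl : (wInv u).length = k - 1 := by rw [length_wInv]; exact hul
  rw [e1, Finset.sum_add_distrib, Finset.sum_add_distrib, hreindex u hul,
    hreindex (wInv u) hwl, ← hOx u hul, ← hOx (wInv u) hwl]
  simp only [occ]
  ring
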